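/- The complement-of-Fano-plane hypergraph FPᶜ, whose hyperedges are the complements in [7] of the 7 lines of the Fano plane, is a 4-uniform B_4-saturated hypergraph on 7 vertices with exactly 7 hyperedges. Hence sat_4(7, B_4) ≤ 7. -/

import Mathlib

/-- If `L` is the family of lines of a Fano plane on `[7]` (a Steiner system
`S(2,3,7)`), then the family of complements of the lines is a 4-uniform
`B₄`-saturated hypergraph on 7 vertices with exactly 7 hyperedges.
Hence `sat₄(7, B₄) ≤ 7`. -/
theorem stmt7 (L : Finset (Finset (Fin 7)))
    (hL7 : L.card = 7)
    (hL3 : ∀ l ∈ L, l.card = 3)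
    (hlines : ∀ l ∈ L, ∀ m ∈ L, l ≠ m → (l ∩ m).card = 1)
    (hpoints : ∀ p q : Fin 7, p ≠ q → ∃! l, l ∈ L ∧ p ∈ l ∧ q ∈ l) :
    (∀ e ∈ L.image (·ᶜ), Finset.card e = 4) ∧
    (L.image (·ᶜ)).card = 7 ∧
    (∀ e ∈ L.image (·ᶜ), ∀ f ∈ L.image (·ᶜ), e ≠ f → (e ∩ f).card ≠ 1) ∧
    (∀ A : Finset (Fin 7), A.card = 4 → A ∉ L.image (·ᶜ) →
      ∃ e ∈ L.image (·ᶜ), (A ∩ e).card = 1) := by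
  classical
  have hcc : ∀ l ∈ L, (lᶜ : Finset (Fin 7)).card = 4 := by
    intro l hl
    rw [Finset.card_compl, hL3 l hl]
    rfl
  refine ⟨?_, ?_, ?_, ?_⟩
  · intro e he
    obtain ⟨l, hl, rfl⟩ := Finset.mem_image.mp he
    exact hcc l hl
  · rw [Finset.card_image_of_injective _ compl_injective, hL7]
  · intro e he f hf hef
    obtain ⟨l, hl, rfl⟩ := Finset.mem_image.mp he
    obtain ⟨m, hm, rfl⟩ := Finset.mem_image.mp hf
    have hlm : l ≠ m := fun h => hef (by rw [h])
    have h1 := hlines l hl m hm hlm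
    have h2 := Finset.card_union_add_card_inter l m
    rw [hL3 l hl, hL3 m hm, h1] at h2
    have h3 : (lᶜ ∩ mᶜ : Finset (Fin 7)) = (l ∪ m)ᶜ := by
      ext x; simp [not_or]
    rw [h3, Finset.card_compl]
    have : (l ∪ m).card = 5 := by omega
    rw [this]
    decide
  · intro A hA hA'
    by_contra hcon
    push_neg at hcon
    -- notation: t l = (A ∩ l).card
    have ht3 : ∀ l ∈ L, (A ∩ l).card ≤ 3 := by
      intro l hl
      calc (A ∩ l).card ≤ l.card := Finset.card_le_card (Finset.inter_subset_right)
        _ = 3 := hL3 l hl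
    have htne3 : ∀ l ∈ L, (A ∩ l).card ≠ 3 := by
      intro l hl h3
      have hmem : lᶜ ∈ L.image (·ᶜ) := Finset.mem_image.mpr ⟨l, hl, rfl⟩
      have := hcon lᶜ hmem
      have hsd : A ∩ lᶜ = A \ l := by ext x; simp [Finset.mem_sdiff, and_comm]
      have h4 := Finset.card_inter_add_card_sdiff A l
      rw [hA, h3] at h4
      rw [hsd] at this
      omega
    have htne0 : ∀ l ∈ L, (A ∩ l).card ≠ 0 := by
      intro l hl h0
      have hdisj : A ∩ l = ∅ := Finset.card_eq_zero.mp h0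
      have hsub : l ⊆ Aᶜ := by
        intro x hx
        simp only [Finset.mem_compl]
        intro hxA
        exact Finset.notMem_empty x (hdisj ▸ Finset.mem_inter.mpr ⟨hxA, hx⟩)
      have hAc : (Aᶜ : Finset (Fin 7)).card = 3 := by
        rw [Finset.card_compl, hA]; rfl
      have hle : l = Aᶜ := Finset.eq_of_subset_of_card_le hsub (by rw [hAc, hL3 l hl])
      apply hA'
      refine Finset.mem_image.mpr ⟨l, hl, ?_⟩
      rw [hle, compl_compl]
    have htge1 : ∀ l ∈ L, 1 ≤ (A ∩ l).card := by
      intro l hl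
      have := htne0 l hl
      omega
    have htle2 : ∀ l ∈ L, (A ∩ l).card ≤ 2 := by
      intro l hl
      have := ht3 l hl
      have := htne3 l hl
      omega
    -- the line through two distinct points, as a function
    have hex : ∀ p q : Fin 7, p ≠ q → ∃ l, (l ∈ L ∧ p ∈ l ∧ q ∈ l) ∧
        ∀ m, (m ∈ L ∧ p ∈ m ∧ q ∈ m) → m = l := hpoints
    choose f hf using hex
    set g : Fin 7 → Fin 7 → Finset (Fin 7) := fun p q =>
      if h : p ≠ q then f p q h else ∅ with hg
    have hgL : ∀ p q, p ≠ q → g p q ∈ L ∧ p ∈ g p q ∧ q ∈ g p q := by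
      intro p q h
      simp only [hg, dif_pos h]
      exact (hf p q h).1
    have hgu : ∀ p q, p ≠ q → ∀ m ∈ L, p ∈ m → q ∈ m → m = g p q := by
      intro p q h m hm hp hq
      simp only [hg, dif_pos h]
      exact (hf p q h).2 m ⟨hm, hp, hq⟩
    -- three lines through each point
    have hthru : ∀ p : Fin 7, (L.filter (fun l => p ∈ l)).card = 3 := by
      intro p
      have hmap : ∀ q ∈ Finset.univ.erase p, g p q ∈ L.filter (fun l => p ∈ l) := by
        intro q hq
        have hpq : p ≠ q := (Finset.ne_of_mem_erase hq).symm
        have := hgL p q hpq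
        exact Finset.mem_filter.mpr ⟨this.1, this.2.1⟩
      have hcount := Finset.card_eq_sum_card_fiberwise hmap
      have hfib : ∀ l ∈ L.filter (fun l => p ∈ l),
          ((Finset.univ.erase p).filter (fun q => g p q = l)).card = 2 := by
        intro l hl
        obtain ⟨hlL, hpl⟩ := Finset.mem_filter.mp hl
        have : (Finset.univ.erase p).filter (fun q => g p q = l) = l.erase p := by
          ext q
          simp only [Finset.mem_filter, Finset.mem_erase, Finset.mem_univ, and_true]
          constructor
          · rintro ⟨hqp, hgq⟩
            have := (hgL p q (Ne.symm hqp)).2.2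
            rw [hgq] at this
            exact ⟨hqp, this⟩
          · rintro ⟨hqp, hql⟩
            exact ⟨hqp, (hgu p q (Ne.symm hqp) l hlL hpl hql).symm⟩
        rw [this, Finset.card_erase_of_mem hpl, hL3 l hlL]
      rw [Finset.sum_congr rfl hfib] at hcount
      have h6 : (Finset.univ.erase p).card = 6 := by
        rw [Finset.card_erase_of_mem (Finset.mem_univ p)]
        rfl
      rw [h6, Finset.sum_const, smul_eq_mul] at hcount
      omega
    -- Claim A : sum of (A ∩ l).card over l in L is 12
    have hclaimA : ∑ l ∈ L, (A ∩ l).card = 12 := by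
      have h1 : ∀ l ∈ L, (A ∩ l).card = ∑ p ∈ A, if p ∈ l then 1 else 0 := by
        intro l _
        have := Finset.sum_boole (fun p => p ∈ l) A (R := ℕ)
        simp only [Nat.cast_id] at this
        rw [this, Finset.filter_mem_eq_inter]
      rw [Finset.sum_congr rfl h1, Finset.sum_comm]
      have h2 : ∀ p ∈ A, (∑ l ∈ L, if p ∈ l then 1 else 0) = 3 := by
        intro p _
        have := Finset.sum_boole (fun l => p ∈ l) L (R := ℕ)
        simp only [Nat.cast_id] at this
        rw [this, hthru p]
      rw [Finset.sum_congr rfl h2, Finset.sum_const, smul_eq_mul, hA]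
    -- Claim B : sum of (A ∩ l).offDiag.card over l in L is 12
    have hclaimB : ∑ l ∈ L, ((A ∩ l).card ^ 2 - (A ∩ l).card) = 12 := by
      have hmap : ∀ pq ∈ A.offDiag, g pq.1 pq.2 ∈ L := by
        intro pq hpq
        obtain ⟨_, _, hne⟩ := Finset.mem_offDiag.mp hpq
        exact (hgL pq.1 pq.2 hne).1
      have hcount := Finset.card_eq_sum_card_fiberwise hmap
      have hAoff : A.offDiag.card = 12 := by
        rw [Finset.offDiag_card, hA]
      have hfib : ∀ l ∈ L, (A.offDiag.filter (fun pq => g pq.1 pq.2 = l)).card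
          = (A ∩ l).card ^ 2 - (A ∩ l).card := by
        intro l hlL
        have : A.offDiag.filter (fun pq => g pq.1 pq.2 = l) = (A ∩ l).offDiag := by
          ext ⟨p, q⟩
          simp only [Finset.mem_filter, Finset.mem_offDiag, Finset.mem_inter]
          constructor
          · rintro ⟨⟨hp, hq, hne⟩, hgl⟩
            have h1 := (hgL p q hne).2.1
            have h2 := (hgL p q hne).2.2
            rw [hgl] at h1 h2
            exact ⟨⟨hp, h1⟩, ⟨hq, h2⟩, hne⟩
          · rintro ⟨⟨hp, hpl⟩, ⟨hq, hql⟩, hne⟩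
            exact ⟨⟨hp, hq, hne⟩, (hgu p q hne l hlL hpl hql).symm⟩
        rw [this, Finset.offDiag_card, sq]
      rw [hAoff, Finset.sum_congr rfl hfib] at hcount
      omega
    -- final contradiction: with t ∈ {1,2}, t^2 + 2 = 3t, sum both sides
    have hkey : ∀ l ∈ L, (A ∩ l).card ^ 2 + 2 = 3 * (A ∩ l).card := by
      intro l hl
      have h1 := htge1 l hl
      have h2 := htle2 l hl
      interval_cases h : (A ∩ l).card <;> rfl
    have hsq : ∑ l ∈ L, (A ∩ l).card ^ 2 = 24 := by
      have : ∀ l ∈ L, (A ∩ l).card ^ 2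
          = ((A ∩ l).card ^ 2 - (A ∩ l).card) + (A ∩ l).card := by
        intro l hl
        have : (A ∩ l).card ≤ (A ∩ l).card ^ 2 := by nlinarith [sq_nonneg ((A ∩ l).card)]
        omega
      rw [Finset.sum_congr rfl this, Finset.sum_add_distrib, hclaimA, hclaimB]
    have hfinal := Finset.sum_congr rfl hkey
    rw [Finset.sum_add_distrib, Finset.sum_const, smul_eq_mul, hL7, hsq,
      ← Finset.mul_sum, hclaimA] at hfinal
    omega
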